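/- Let h be a Γ-equivariant continuous hermitian metric. Then there exists a continuous function ψ : G → ℝ such that h(gk)(v, v) ≤ ψ(k) · h(g)(v, v) for all g, k ∈ G and all v ∈ V. -/

import Mathlib

open MeasureTheory

/-- A `Γ`-equivariant continuous hermitian metric on the trivial `V`-bundle over `G`:
a continuous assignment `g ↦ h g` of a hermitian inner product on `V`
(conjugate-linear in the first variable, linear in the second) satisfying
`h (γ * g) (χ γ v) (χ γ w) = h g v w`. -/
def IsEquivariantHermitianMetric {G V : Type*} [Group G] [TopologicalSpace G]
    [NormedAddCommGroup V] [NormedSpace ℂ V]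
    (Γ : Subgroup G) (χ : Γ →* (V →ₗ[ℂ] V)ˣ) (h : G → V → V → ℂ) : Prop :=
  Continuous (fun p : G × V × V => h p.1 p.2.1 p.2.2) ∧
  (∀ (g : G) (v w w' : V), h g v (w + w') = h g v w + h g v w') ∧
  (∀ (g : G) (a : ℂ) (v w : V), h g v (a • w) = a * h g v w) ∧
  (∀ (g : G) (v w : V), h g w v = (starRingEnd ℂ) (h g v w)) ∧
  (∀ (g : G) (v : V), v ≠ 0 → 0 < (h g v v).re) ∧
  (∀ (γ : Γ) (g : G) (v w : V),
    h ((γ : G) * g) ((χ γ : V →ₗ[ℂ] V) v) ((χ γ : V →ₗ[ℂ] V) w) = h g v w)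

/-- For a `Γ`-equivariant continuous hermitian metric `h` there is a
continuous function `ψ : G → ℝ` with `h (g * k) (v, v) ≤ ψ k * h g (v, v)` for all
`g, k ∈ G` and `v ∈ V`. -/
theorem exists_continuous_bound_of_equivariant_metric
    {G V : Type*} [Group G] [TopologicalSpace G] [IsTopologicalGroup G]
    [LocallyCompactSpace G] [T2Space G] [SecondCountableTopology G]
    [MeasurableSpace G] [BorelSpace G] (μ : Measure G)
    [μ.IsHaarMeasure] [μ.IsMulRightInvariant]
    [NormedAddCommGroup V] [NormedSpace ℂ V] [FiniteDimensional ℂ V] [Nontrivial V]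
    (Γ : Subgroup G) [DiscreteTopology Γ]
    (hcocompact : ∃ C : Set G, IsCompact C ∧ ∀ g : G, ∃ γ ∈ Γ, γ * g ∈ C)
    (χ : Γ →* (V →ₗ[ℂ] V)ˣ)
    (h : G → V → V → ℂ) (hh : IsEquivariantHermitianMetric Γ χ h) :
    ∃ ψ : G → ℝ, Continuous ψ ∧
      ∀ (g k : G) (v : V), (h (g * k) v v).re ≤ ψ k * (h g v v).re := by
  obtain ⟨hcont, _hadd, hsmul, hconj, hpos, hequiv⟩ := hh
  obtain ⟨C, hC, hcov⟩ := hcocompact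
  -- C is nonempty
  obtain ⟨γ0, hγ0, hγ0C⟩ := hcov 1
  have hCne : C.Nonempty := ⟨γ0 * 1, hγ0C⟩
  -- the compact parameter set
  set K : Set (G × V) := C ×ˢ Metric.sphere (0 : V) 1 with hKdef
  have hK : IsCompact K := hC.prod (isCompact_sphere 0 1)
  have hKne : K.Nonempty := hCne.prod (NormedSpace.sphere_nonempty.mpr zero_le_one)
  haveI : CompactSpace K := isCompact_iff_compactSpace.mp hK
  -- basic sesquilinearity consequences
  have hsmul' : ∀ (x : G) (a : ℂ) (v w : V),
      h x (a • v) w = (starRingEnd ℂ) a * h x v w := by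
    intro x a v w
    have h1 : h x (a • v) w = (starRingEnd ℂ) (h x w (a • v)) := hconj x w (a • v)
    rw [h1, hsmul, map_mul]
    congr 1
    rw [← hconj]
  have hscale : ∀ (x : G) (r : ℝ) (v : V),
      (h x ((r : ℂ) • v) ((r : ℂ) • v)).re = r ^ 2 * (h x v v).re := by
    intro x r v
    rw [hsmul, hsmul']
    simp [Complex.mul_re, Complex.conj_ofReal]
    ring
  -- the continuous family of functions on K
  have hinner : Continuous fun q : G × K =>
      (((q.2 : G × V).1 * q.1, ((q.2 : G × V).2, (q.2 : G × V).2)) : G × V × V) := by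
    fun_prop
  let F : C(G × K, ℝ) :=
    ⟨fun q => (h ((q.2 : G × V).1 * q.1) (q.2 : G × V).2 (q.2 : G × V).2).re,
      Complex.continuous_re.comp (hcont.comp hinner)⟩
  -- the positive lower bound c on K
  have hcontK : ContinuousOn (fun p : G × V => (h p.1 p.2 p.2).re) K := by
    apply Continuous.continuousOn
    have hi : Continuous fun p : G × V => ((p.1, (p.2, p.2)) : G × V × V) := by fun_prop
    have := hcont.comp hi
    exact Complex.continuous_re.comp this
  obtain ⟨p0, hp0K, hp0min⟩ := hK.exists_isMinOn hKne hcontK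
  set c : ℝ := (h p0.1 p0.2 p0.2).re with hcdef
  have hc : 0 < c := by
    apply hpos
    have : ‖p0.2‖ = 1 := mem_sphere_zero_iff_norm.mp hp0K.2
    intro h0
    rw [h0] at this
    simp at this
  refine ⟨fun k => ‖F.curry k‖ / c, (F.curry.continuous.norm).div_const c, ?_⟩
  intro g k v
  by_cases hv : v = 0
  · have h00 : ∀ x : G, (h x (0 : V) (0 : V)).re = 0 := by
      intro x
      have := hsmul x 0 0 0
      simp only [zero_smul, zero_mul] at this
      rw [this]
      simp
    rw [hv, h00, h00, mul_zero]
  · obtain ⟨γ, hγΓ, hγC⟩ := hcov g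
    set γ' : Γ := ⟨γ, hγΓ⟩ with hγ'def
    set w : V := (χ γ' : V →ₗ[ℂ] V) v with hwdef
    have hw : w ≠ 0 := by
      intro h0
      apply hv
      have : ((χ γ')⁻¹ : (V →ₗ[ℂ] V)ˣ).val ((χ γ' : V →ₗ[ℂ] V) v) = v := by
        rw [← Module.End.mul_apply, ← Units.val_mul, inv_mul_cancel]
        rfl
      rw [← this, ← hwdef, h0, map_zero]
    have hwn : (0 : ℝ) < ‖w‖ := norm_pos_iff.mpr hw
    set u : V := ((‖w‖ : ℂ)⁻¹) • w with hudef
    have hun : ‖u‖ = 1 := by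
      rw [hudef, norm_smul]
      simp [abs_of_pos hwn, inv_mul_cancel₀ (ne_of_gt hwn)]
    have huS : u ∈ Metric.sphere (0 : V) 1 := mem_sphere_zero_iff_norm.mpr hun
    have hwu : w = ((‖w‖ : ℝ) : ℂ) • u := by
      rw [hudef, smul_smul, mul_inv_cancel₀, one_smul]
      exact_mod_cast ne_of_gt hwn
    -- equivariance identities
    have heq1 : (h (g * k) v v).re = ‖w‖ ^ 2 * (h ((γ * g) * k) u u).re := by
      have e1 : h (γ * (g * k)) w w = h (g * k) v v := hequiv γ' (g * k) v v
      rw [← e1, mul_assoc]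
      conv_lhs => rw [hwu]
      rw [hscale]
    have heq2 : (h g v v).re = ‖w‖ ^ 2 * (h (γ * g) u u).re := by
      have e1 : h (γ * g) w w = h g v v := hequiv γ' g v v
      rw [← e1]
      conv_lhs => rw [hwu]
      rw [hscale]
    have hmemK : ((γ * g, u) : G × V) ∈ K := ⟨hγC, huS⟩
    set A : ℝ := (h ((γ * g) * k) u u).re with hAdef
    set B : ℝ := (h (γ * g) u u).re with hBdef
    set M : ℝ := ‖F.curry k‖ with hMdef
    have hA : A ≤ M := by
      have h1 : |F.curry k ⟨(γ * g, u), hmemK⟩| ≤ M :=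
        (F.curry k).norm_coe_le_norm ⟨(γ * g, u), hmemK⟩
      have h2 : F.curry k ⟨(γ * g, u), hmemK⟩ = A := rfl
      rw [h2] at h1
      exact (le_abs_self A).trans h1
    have hM : 0 ≤ M := norm_nonneg _
    have hB : c ≤ B := hp0min hmemK
    rw [heq1, heq2]
    calc ‖w‖ ^ 2 * A ≤ ‖w‖ ^ 2 * M := mul_le_mul_of_nonneg_left hA (sq_nonneg _)
      _ = ‖w‖ ^ 2 * (M / c * c) := by rw [div_mul_cancel₀ _ (ne_of_gt hc)]
      _ ≤ ‖w‖ ^ 2 * (M / c * B) :=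
          mul_le_mul_of_nonneg_left
            (mul_le_mul_of_nonneg_left hB (div_nonneg hM hc.le)) (sq_nonneg _)
      _ = M / c * (‖w‖ ^ 2 * B) := by ring
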